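/- Let Σ be the complete fan in Z^2 with ray generators ±(1,0), ±(0,1), (1,±1), (1,-2), (-1,1), (-2,1) (the surface W_7). Every primitive collection of Σ has degree ≥ 0, i.e., W_7 is a toric weak del Pezzo surface. -/
import Mathlib


/-- The ray generators of the fan of `W₇`, in counterclockwise order. -/
def w7 : Fin 9 → ℤ × ℤ := ![(1,0),(1,1),(0,1),(-1,1),(-2,1),(-1,0),(0,-1),(1,-2),(1,-1)]

def wit : Fin 9 → Fin 9 → Fin 9 × ℕ × ℕ :=
  ![![(0,0,0),(0,0,0),(0,0,1),(1,0,1),(2,0,1),(0,0,0),(7,0,1),(7,0,2),(0,0,0)],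
    ![(0,0,0),(0,0,0),(0,0,0),(1,0,2),(2,1,1),(1,0,1),(0,1,0),(8,1,1),(0,2,0)],
    ![(0,0,1),(0,0,0),(0,0,0),(0,0,0),(2,0,2),(2,0,1),(0,0,0),(7,0,1),(0,1,0)],
    ![(1,0,1),(1,0,2),(0,0,0),(0,0,0),(0,0,0),(3,0,1),(4,0,1),(5,0,1),(0,0,0)],
    ![(2,0,1),(2,1,1),(2,0,2),(0,0,0),(0,0,0),(0,0,0),(4,0,2),(5,1,1),(4,0,1)],
    ![(0,0,0),(1,0,1),(2,0,1),(3,0,1),(0,0,0),(0,0,0),(0,0,0),(5,0,2),(5,0,1)],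
    ![(7,0,1),(0,1,0),(0,0,0),(4,0,1),(4,0,2),(0,0,0),(0,0,0),(0,0,0),(6,0,1)],
    ![(7,0,2),(8,1,1),(7,0,1),(5,0,1),(5,1,1),(5,0,2),(0,0,0),(0,0,0),(0,0,0)],
    ![(0,0,0),(0,2,0),(0,1,0),(0,0,0),(4,0,1),(5,0,1),(6,0,1),(0,0,0),(0,0,0)]]

theorem key : ∀ i j : Fin 9, j ≠ i → j ≠ i + 1 → i ≠ j + 1 →
    w7 i + w7 j = ((wit i j).2.1 : ℤ) • w7 (wit i j).1
      + ((wit i j).2.2 : ℤ) • w7 ((wit i j).1 + 1) ∧ (wit i j).2.1 + (wit i j).2.2 ≤ 2 := by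
  decide

/-- Every primitive collection (= non-adjacent pair of rays) of the fan of `W₇`
has degree `≥ 0`: the sum of the pair is a nonnegative combination, with coefficient
sum at most `2`, of the generators of the cone containing it. -/
theorem stmt7 :
    ∀ i j : Fin 9, j ≠ i → j ≠ i + 1 → i ≠ j + 1 →
      ∃ (k : Fin 9) (a b : ℕ),
        w7 i + w7 j = (a : ℤ) • w7 k + (b : ℤ) • w7 (k + 1) ∧ a + b ≤ 2 := by
  exact fun i j h1 h2 h3 =>
    ⟨(wit i j).1, (wit i j).2.1, (wit i j).2.2, key i j h1 h2 h3⟩
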